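/- The Lebesgue integral over the punctured disc {z ∈ ℂ : 0 < |z| < 1/2} of ε² / ((|z|² + ε²) · |z|² · (log|z|²)²) tends to 0 as ε → 0⁺. -/

import Mathlib

open MeasureTheory Filter

open scoped Real

set_option maxHeartbeats 1000000 in
lemma aux_1d : IntegrableOn (fun r : ℝ => 1 / (r * Real.log r ^ 2)) (Set.Ioc 0 (1/2)) := by
  apply intervalIntegral.integrableOn_deriv_of_nonneg (g := fun r => -(Real.log r)⁻¹)
  · intro x hx
    rcases eq_or_lt_of_le hx.1 with h0 | h0
    · subst h0
      have hF0 : -(Real.log 0)⁻¹ = (0:ℝ) := by simp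
      have h1 : Tendsto (fun r : ℝ => -(Real.log r)⁻¹) (nhdsWithin 0 (Set.Ioi 0)) (nhds 0) := by
        have := tendsto_inv_atTop_zero.comp
          (tendsto_neg_atBot_atTop.comp Real.tendsto_log_nhdsGT_zero)
        simpa [Function.comp_def, inv_neg] using this
      have hIoi : ContinuousWithinAt (fun r : ℝ => -(Real.log r)⁻¹) (Set.Ioi 0) 0 := by
        unfold ContinuousWithinAt
        rw [show (fun r : ℝ => -(Real.log r)⁻¹) 0 = 0 from hF0]
        exact h1
      exact (continuousWithinAt_Ioi_iff_Ici.mp hIoi).mono Set.Icc_subset_Ici_self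
    · have hlx : Real.log x ≠ 0 := ne_of_lt (Real.log_neg h0 (by linarith [hx.2]))
      exact (((Real.continuousAt_log (ne_of_gt h0)).inv₀ hlx).neg).continuousWithinAt
  · intro x hx
    have hx0 : x ≠ 0 := ne_of_gt hx.1
    have hlx : Real.log x ≠ 0 := ne_of_lt (Real.log_neg hx.1 (by linarith [hx.2]))
    have h1 : HasDerivAt Real.log x⁻¹ x := Real.hasDerivAt_log hx0
    have h2 := (h1.inv hlx).neg
    refine h2.congr_deriv ?_
    rw [neg_div, neg_neg, inv_eq_one_div, div_div]
  · intro x hx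
    exact div_nonneg (by norm_num) (mul_nonneg hx.1.le (sq_nonneg _))

set_option maxHeartbeats 1000000 in
lemma aux_2d : IntegrableOn
    (fun p : ℝ × ℝ => 1 / ((p.1^2 + p.2^2) * Real.log (p.1^2 + p.2^2) ^ 2))
    {p : ℝ × ℝ | 0 < Real.sqrt (p.1^2 + p.2^2) ∧ Real.sqrt (p.1^2 + p.2^2) < 1/2} := by
  set g₂ : ℝ × ℝ → ℝ :=
    fun p => 1 / ((p.1^2 + p.2^2) * Real.log (p.1^2 + p.2^2) ^ 2) with hg₂
  set S' : Set (ℝ × ℝ) :=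
    {p | 0 < Real.sqrt (p.1^2 + p.2^2) ∧ Real.sqrt (p.1^2 + p.2^2) < 1/2} with hS'
  set s : Set (ℝ × ℝ) := Set.Ioo (0:ℝ) (1/2) ×ˢ Set.Ioo (-π) π with hs_def
  have hs_sub : s ⊆ polarCoord.target := by
    rw [polarCoord_target]
    exact Set.prod_mono Set.Ioo_subset_Ioi_self subset_rfl
  have hs : MeasurableSet s := measurableSet_Ioo.prod measurableSet_Ioo
  have himg : polarCoord.symm '' s = S' ∩ polarCoord.source := by
    apply Set.Subset.antisymm
    · rintro _ ⟨⟨r, θ⟩, ⟨hr, hθ⟩, rfl⟩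
      constructor
      · simp only [polarCoord_symm_apply, hS', Set.mem_setOf_eq]
        have h1 : (r * Real.cos θ)^2 + (r * Real.sin θ)^2 = r^2 := by
          have := Real.sin_sq_add_cos_sq θ; nlinarith
        rw [h1, Real.sqrt_sq hr.1.le]
        exact ⟨hr.1, hr.2⟩
      · exact polarCoord.map_target (hs_sub ⟨hr, hθ⟩)
    · rintro p ⟨hp1, hp2⟩
      refine ⟨polarCoord p, ?_, polarCoord.left_inv hp2⟩
      have ht := polarCoord.map_source hp2
      rw [polarCoord_target] at ht
      exact ⟨⟨ht.1, hp1.2⟩, ht.2⟩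
  set f' : ℝ × ℝ → (ℝ × ℝ) →L[ℝ] (ℝ × ℝ) := fun p =>
    LinearMap.toContinuousLinearMap (Matrix.toLin (Module.Basis.finTwoProd ℝ) (Module.Basis.finTwoProd ℝ)
      !![Real.cos p.2, -p.1 * Real.sin p.2; Real.sin p.2, p.1 * Real.cos p.2]) with hf'def
  have hf' : ∀ p ∈ s, HasFDerivWithinAt polarCoord.symm (f' p) s p :=
    fun p _ => (hasFDerivAt_polarCoord_symm p).hasFDerivWithinAt
  have hdet : ∀ p : ℝ × ℝ, (f' p).det = p.1 := by
    intro p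
    conv_rhs => rw [← one_mul p.1, ← Real.cos_sq_add_sin_sq p.2]
    simp only [hf'def, neg_mul, LinearMap.det_toContinuousLinearMap, LinearMap.det_toLin,
      Matrix.det_fin_two_of, sub_neg_eq_add]
    ring
  have hinj : Set.InjOn polarCoord.symm s := polarCoord.symm.injOn.mono hs_sub
  have key := integrableOn_image_iff_integrableOn_abs_det_fderiv_smul volume hs hf' hinj g₂
  rw [himg] at key
  have hprod : IntegrableOn
      (fun p : ℝ × ℝ => ((1:ℝ)/4 * (1 / (p.1 * Real.log p.1 ^ 2))) * (fun _ : ℝ => (1:ℝ)) p.2)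
      s := by
    rw [IntegrableOn, hs_def, Measure.volume_eq_prod, ← Measure.prod_restrict]
    have h1 : Integrable (fun r : ℝ => (1:ℝ)/4 * (1 / (r * Real.log r ^ 2)))
        (volume.restrict (Set.Ioo (0:ℝ) (1/2))) :=
      (aux_1d.mono_set Set.Ioo_subset_Ioc_self).const_mul _
    have h2 : Integrable (fun _ : ℝ => (1:ℝ)) (volume.restrict (Set.Ioo (-π) π)) :=
      integrableOn_const measure_Ioo_lt_top.ne
    exact h1.mul_prod h2
  have hRHS : IntegrableOn (fun p => |(f' p).det| • g₂ (polarCoord.symm p)) s := by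
    apply hprod.congr_fun _ hs
    rintro ⟨r, θ⟩ ⟨hr, hθ⟩
    have hr0 : (0:ℝ) < r := hr.1
    have hlr : Real.log r ≠ 0 := ne_of_lt (Real.log_neg hr0 (by linarith [hr.2]))
    simp only [hdet, polarCoord_symm_apply, hg₂, smul_eq_mul]
    have h1 : (r * Real.cos θ)^2 + (r * Real.sin θ)^2 = r^2 := by
      nlinarith [Real.sin_sq_add_cos_sq θ]
    rw [h1, abs_of_pos hr0,
      show Real.log (r^2) = 2 * Real.log r from by rw [Real.log_pow]; norm_num]
    field_simp
    ring
  have h3 : (S' ∩ polarCoord.source : Set (ℝ × ℝ)) =ᵐ[volume] S' := by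
    filter_upwards [polarCoord_source_ae_eq_univ] with p hp
    simp only [eq_iff_iff] at hp ⊢
    exact ⟨fun h => h.1, fun h => ⟨h, hp.mpr trivial⟩⟩
  exact (key.mpr hRHS).congr_set_ae h3.symm

set_option maxHeartbeats 1000000 in
lemma aux_c : IntegrableOn
    (fun z : ℂ => 1 / (‖z‖ ^ 2 * Real.log (‖z‖ ^ 2) ^ 2))
    {z : ℂ | 0 < ‖z‖ ∧ ‖z‖ < 1 / 2} := by
  have habs : ∀ z : ℂ, ‖z‖ = Real.sqrt (z.re ^ 2 + z.im ^ 2) := by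
    intro z
    rw [Complex.norm_def, Complex.normSq_apply]
    ring_nf
  have habs2 : ∀ z : ℂ, ‖z‖ ^ 2 = z.re ^ 2 + z.im ^ 2 := by
    intro z
    rw [Complex.sq_norm, Complex.normSq_apply]
    ring
  have hsetpre : (Complex.measurableEquivRealProd ⁻¹'
      {p : ℝ × ℝ | 0 < Real.sqrt (p.1^2 + p.2^2) ∧ Real.sqrt (p.1^2 + p.2^2) < 1/2}) =
      {z : ℂ | 0 < ‖z‖ ∧ ‖z‖ < 1/2} := by
    ext z
    simp only [Set.mem_preimage, Set.mem_setOf_eq, Complex.measurableEquivRealProd_apply]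
    rw [habs z]
  have hfun : (fun z : ℂ => 1 / (‖z‖ ^ 2 * Real.log (‖z‖ ^ 2) ^ 2)) =
      (fun p : ℝ × ℝ => 1 / ((p.1^2 + p.2^2) * Real.log (p.1^2 + p.2^2) ^ 2)) ∘
        Complex.measurableEquivRealProd := by
    funext z
    simp [Function.comp, Complex.measurableEquivRealProd_apply, habs2 z]
  rw [← hsetpre, hfun]
  rw [Complex.volume_preserving_equiv_real_prod.integrableOn_comp_preimage
    Complex.measurableEquivRealProd.measurableEmbedding]
  exact aux_2d

set_option maxHeartbeats 1000000 in
/-- The Lebesgue integral over the punctured disc `{z ∈ ℂ : 0 < |z| < 1/2}` of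
`ε² / ((|z|²+ε²) |z|² (log |z|²)²)` tends to `0` as `ε → 0⁺`. -/
theorem tendsto_integral_cusp :
    Tendsto (fun ε : ℝ =>
        ∫ z in {z : ℂ | 0 < ‖z‖ ∧ ‖z‖ < 1 / 2},
          ε ^ 2 / ((‖z‖ ^ 2 + ε ^ 2) * ‖z‖ ^ 2 *
            (Real.log (‖z‖ ^ 2)) ^ 2))
      (nhdsWithin 0 (Set.Ioi 0)) (nhds 0) := by
  set S : Set ℂ := {z : ℂ | 0 < ‖z‖ ∧ ‖z‖ < 1 / 2} with hS
  have hSm : MeasurableSet S := by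
    have h1 : S = {z : ℂ | 0 < ‖z‖} ∩ {z : ℂ | ‖z‖ < 1/2} := rfl
    rw [h1]
    exact (measurableSet_lt measurable_const continuous_norm.measurable).inter
      (measurableSet_lt continuous_norm.measurable measurable_const)
  have hA : Measurable fun z : ℂ => ‖z‖ ^ 2 :=
    (continuous_norm.pow 2).measurable
  have hL : Measurable fun z : ℂ => Real.log (‖z‖ ^ 2) :=
    Real.measurable_log.comp hA
  have key := tendsto_integral_filter_of_dominated_convergence
      (μ := volume.restrict S) (l := nhdsWithin (0:ℝ) (Set.Ioi 0))
      (F := fun (ε : ℝ) (z : ℂ) => ε ^ 2 / ((‖z‖ ^ 2 + ε ^ 2) *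
        ‖z‖ ^ 2 * Real.log (‖z‖ ^ 2) ^ 2))
      (f := fun _ : ℂ => (0:ℝ))
      (bound := fun z : ℂ => 1 / (‖z‖ ^ 2 * Real.log (‖z‖ ^ 2) ^ 2))
      ?_ ?_ aux_c ?_
  · simpa using key
  · apply Filter.Eventually.of_forall
    intro ε
    exact (measurable_const.div
      (((hA.add_const (ε^2)).mul hA).mul (hL.pow_const 2))).aestronglyMeasurable
  · filter_upwards [self_mem_nhdsWithin] with ε hε
    rw [ae_restrict_iff' hSm]
    apply ae_of_all
    intro z hz
    obtain ⟨h1, h2⟩ := hz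
    have ha : 0 < ‖z‖ ^ 2 := pow_pos h1 2
    have ha1 : ‖z‖ ^ 2 < 1 := by nlinarith
    have hlneg : Real.log (‖z‖ ^ 2) < 0 := Real.log_neg ha ha1
    have hL2 : 0 < Real.log (‖z‖ ^ 2) ^ 2 :=
      lt_of_le_of_ne (sq_nonneg _) (Ne.symm (pow_ne_zero 2 (ne_of_lt hlneg)))
    have hD : 0 < (‖z‖ ^ 2 + ε ^ 2) * ‖z‖ ^ 2 *
        Real.log (‖z‖ ^ 2) ^ 2 :=
      mul_pos (mul_pos (add_pos_of_pos_of_nonneg ha (sq_nonneg ε)) ha) hL2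
    have hnn : 0 ≤ ε ^ 2 / ((‖z‖ ^ 2 + ε ^ 2) * ‖z‖ ^ 2 *
        Real.log (‖z‖ ^ 2) ^ 2) := div_nonneg (sq_nonneg ε) hD.le
    rw [Real.norm_eq_abs, abs_of_nonneg hnn, div_le_div_iff₀ hD (mul_pos ha hL2)]
    nlinarith [mul_pos (mul_pos ha ha) hL2, mul_nonneg (mul_nonneg (sq_nonneg ε) ha.le) hL2.le]
  · rw [ae_restrict_iff' hSm]
    apply ae_of_all
    intro z hz
    obtain ⟨h1, h2⟩ := hz
    have ha : 0 < ‖z‖ ^ 2 := pow_pos h1 2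
    have ha1 : ‖z‖ ^ 2 < 1 := by nlinarith
    have hlneg : Real.log (‖z‖ ^ 2) < 0 := Real.log_neg ha ha1
    have hL2 : 0 < Real.log (‖z‖ ^ 2) ^ 2 :=
      lt_of_le_of_ne (sq_nonneg _) (Ne.symm (pow_ne_zero 2 (ne_of_lt hlneg)))
    have hc : Continuous fun ε : ℝ => ε ^ 2 / ((‖z‖ ^ 2 + ε ^ 2) *
        ‖z‖ ^ 2 * Real.log (‖z‖ ^ 2) ^ 2) := by
      apply Continuous.div (continuous_pow 2)
      · continuity
      · intro ε
        exact ne_of_gt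
          (mul_pos (mul_pos (add_pos_of_pos_of_nonneg ha (sq_nonneg ε)) ha) hL2)
    have h0 := hc.tendsto 0
    simp only [ne_eq, OfNat.ofNat_ne_zero, not_false_eq_true, zero_pow, zero_div] at h0
    exact h0.mono_left nhdsWithin_le_nhds
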